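/- Let K : ℤ → ℂ satisfy |K(m)| ≤ C₀/|m| for all m ≠ 0, for some constant C₀. Define, for finitely supported f₁, f₂ : ℤ → ℂ, T(f₁,f₂)(n) = ∑_{m ∈ ℤ, m ≠ 0} K(m) f₁(n−m) f₂(n−m²). Then there exists a constant C (depending only on C₀) such that ‖T(f₁,f₂)‖_{ℓ²(ℤ)} ≤ C ‖f₁‖_{ℓ²(ℤ)} ‖f₂‖_{ℓ²(ℤ)} for all such f₁, f₂. -/

import Mathlib

open MeasureTheory Complex Real
open scoped Classical ENNReal NNReal

noncomputable section

namespace Stmt18Aux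

lemma l2_eq (f : ℤ → ℂ) :
    eLpNorm f 2 (Measure.count : Measure ℤ)
      = (∑' n : ℤ, (‖f n‖₊ : ℝ≥0∞) ^ (2:ℝ)) ^ (1/2 : ℝ) := by
  rw [eLpNorm_eq_lintegral_rpow_enorm_toReal (by norm_num) (by norm_num), lintegral_count]
  norm_num
  rfl

lemma tsum_CS {α : Type*} [Countable α] [MeasurableSpace α] [MeasurableSingletonClass α]
    (a b : α → ℝ≥0∞) :
    ∑' m, a m * b m ≤ (∑' m, a m ^ (2:ℝ)) ^ (1/2:ℝ) * (∑' m, b m ^ (2:ℝ)) ^ (1/2:ℝ) := by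
  have hpq : Real.HolderConjugate 2 2 := Real.HolderConjugate.two_two
  have := ENNReal.lintegral_mul_le_Lp_mul_Lq (Measure.count : Measure α) hpq
    (measurable_of_countable a).aemeasurable (measurable_of_countable b).aemeasurable
  simpa [lintegral_count] using this

lemma sq_inj : Function.Injective
    (fun m : {m : ℤ // m ≠ 0} => (((m : ℤ) ^ 2 : ℤ), decide (0 < (m : ℤ)))) := by
  rintro ⟨m₁, h₁⟩ ⟨m₂, h₂⟩ h
  simp only [Prod.mk.injEq, decide_eq_decide] at h
  obtain ⟨hsq, hsgn⟩ := h
  have h3 : (m₁ - m₂) * (m₁ + m₂) = 0 := by ring_nf; linarith [hsq]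
  rcases mul_eq_zero.mp h3 with h4 | h4 <;> (ext; simp only []; omega)

lemma g_finsupp (K : ℤ → ℂ) (f₁ f₂ : ℤ → ℂ) (h₁ : (Function.support f₁).Finite) (n : ℤ) :
    (Function.support
      (fun m : {m : ℤ // m ≠ 0} => K m * f₁ (n - m) * f₂ (n - (m : ℤ) ^ 2))).Finite := by
  have : Function.support
      (fun m : {m : ℤ // m ≠ 0} => K m * f₁ (n - m) * f₂ (n - (m : ℤ) ^ 2))
      ⊆ (fun m : {m : ℤ // m ≠ 0} => (m : ℤ)) ⁻¹' ((fun a => n - a) '' Function.support f₁) := by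
    intro m hm
    simp only [Function.mem_support] at hm
    have hf : f₁ (n - m) ≠ 0 := by
      intro h; apply hm; rw [h]; ring
    exact ⟨n - m, hf, by ring⟩
  exact Set.Finite.subset ((h₁.image _).preimage (Subtype.val_injective.injOn)) this

/-- finite ℓ² sum for finitely supported functions. -/
lemma E_ne_top (f : ℤ → ℂ) (h : (Function.support f).Finite) :
    (∑' n : ℤ, (‖f n‖₊ : ℝ≥0∞) ^ (2:ℝ)) ≠ ⊤ := by
  rw [tsum_eq_sum (s := h.toFinset) (fun n hn => by
    have : f n = 0 := by
      by_contra hc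
      exact hn (h.mem_toFinset.mpr hc)
    simp [this, ENNReal.zero_rpow_of_pos])]
  exact (ENNReal.sum_lt_top.mpr (fun n _ =>
    ENNReal.rpow_lt_top_of_nonneg (by norm_num) ENNReal.coe_ne_top)).ne

end Stmt18Aux

end

/-- Discrete bilinear operator `T(f₁,f₂)(n) = ∑_{m ≠ 0} K(m) f₁(n-m) f₂(n-m²)` with a kernel
satisfying `|K(m)| ≤ C₀/|m|` is bounded on `ℓ²(ℤ) × ℓ²(ℤ) → ℓ²(ℤ)`. -/
theorem stmt18 (C₀ : ℝ) (K : ℤ → ℂ) (hK : ∀ m : ℤ, m ≠ 0 → ‖K m‖ ≤ C₀ / |(m : ℝ)|) :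
    ∃ C : ℝ, 0 < C ∧
      ∀ f₁ f₂ : ℤ → ℂ, (Function.support f₁).Finite → (Function.support f₂).Finite →
        eLpNorm
            (fun n : ℤ => ∑' m : {m : ℤ // m ≠ 0}, K m * f₁ (n - m) * f₂ (n - (m : ℤ) ^ 2)) 2
            (Measure.count : Measure ℤ)
          ≤ ENNReal.ofReal
              (C * (eLpNorm f₁ 2 (Measure.count : Measure ℤ)).toReal *
                (eLpNorm f₂ 2 (Measure.count : Measure ℤ)).toReal) := by
  have hC₀ : 0 ≤ C₀ := by
    have := hK 1 one_ne_zero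
    simp only [Int.cast_one, abs_one, div_one] at this
    exact (norm_nonneg (K 1)).trans this
  have hSr_sum : Summable (fun m : {m : ℤ // m ≠ 0} => 1 / ((m : ℤ) : ℝ) ^ 2) :=
    ((summable_one_div_int_pow (p := 2)).mpr one_lt_two).subtype _
  set Sr : ℝ := ∑' m : {m : ℤ // m ≠ 0}, 1 / ((m : ℤ) : ℝ) ^ 2 with hSrdef
  have hSr0 : 0 ≤ Sr := tsum_nonneg (fun m => by positivity)
  set C : ℝ := C₀ * Real.sqrt (2 * Sr) + 1 with hCdef
  have hCpos : 0 < C := by positivity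
  refine ⟨C, hCpos, ?_⟩
  intro f₁ f₂ h₁ h₂
  set Z' := {m : ℤ // m ≠ 0}
  set F₁ : ℤ → ℝ≥0∞ := fun k => (‖f₁ k‖₊ : ℝ≥0∞) with hF₁
  set F₂ : ℤ → ℝ≥0∞ := fun k => (‖f₂ k‖₊ : ℝ≥0∞) with hF₂
  set κ : Z' → ℝ≥0∞ := fun m => (‖K m‖₊ : ℝ≥0∞) with hκ
  set E₁ : ℝ≥0∞ := ∑' n : ℤ, F₁ n ^ (2:ℝ) with hE₁
  set E₂ : ℝ≥0∞ := ∑' n : ℤ, F₂ n ^ (2:ℝ) with hE₂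
  set T : ℤ → ℂ := fun n => ∑' m : Z', K m * f₁ (n - m) * f₂ (n - (m : ℤ) ^ 2) with hT
  set A : ℤ → ℝ≥0∞ := fun n => ∑' m : Z', (κ m * F₁ (n - m)) ^ (2:ℝ) with hA
  set B : ℤ → ℝ≥0∞ := fun n => ∑' m : Z', (F₂ (n - (m:ℤ)^2)) ^ (2:ℝ) with hB
  -- pointwise bound
  have hpt : ∀ n : ℤ, (‖T n‖₊ : ℝ≥0∞) ^ (2:ℝ) ≤ A n * B n := by
    intro n
    set g : Z' → ℂ := fun m => K m * f₁ (n - m) * f₂ (n - (m : ℤ) ^ 2) with hg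
    have hfin := Stmt18Aux.g_finsupp K f₁ f₂ h₁ n
    have hgs' : Summable (fun m : Z' => ‖g m‖₊) := by
      apply summable_of_finite_support
      apply hfin.subset
      intro m hm
      simp only [Function.mem_support, ne_eq, nnnorm_eq_zero] at hm ⊢
      exact hm
    have hb : (‖T n‖₊ : ℝ≥0∞) ≤ ∑' m : Z', (κ m * F₁ (n - m)) * F₂ (n - (m:ℤ)^2) := by
      calc (‖T n‖₊ : ℝ≥0∞) ≤ ((∑' m : Z', ‖g m‖₊ : ℝ≥0) : ℝ≥0∞) := by
            exact_mod_cast nnnorm_tsum_le hgs'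
        _ = ∑' m : Z', (‖g m‖₊ : ℝ≥0∞) := ENNReal.coe_tsum hgs'
        _ = ∑' m : Z', (κ m * F₁ (n - m)) * F₂ (n - (m:ℤ)^2) := by
            apply tsum_congr; intro m
            simp [hg, hκ, hF₁, hF₂, nnnorm_mul, ENNReal.coe_mul, mul_assoc]
    calc (‖T n‖₊ : ℝ≥0∞) ^ (2:ℝ)
        ≤ (∑' m : Z', (κ m * F₁ (n - m)) * F₂ (n - (m:ℤ)^2)) ^ (2:ℝ) :=
          ENNReal.rpow_le_rpow hb (by norm_num)
      _ ≤ ((A n) ^ (1/2:ℝ) * (B n) ^ (1/2:ℝ)) ^ (2:ℝ) :=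
          ENNReal.rpow_le_rpow (Stmt18Aux.tsum_CS _ _) (by norm_num)
      _ = A n * B n := by
          rw [ENNReal.mul_rpow_of_nonneg _ _ (by norm_num), ← ENNReal.rpow_mul,
            ← ENNReal.rpow_mul]
          norm_num
  -- B is uniformly bounded
  have hBbd : ∀ n : ℤ, B n ≤ 2 * E₂ := by
    intro n
    have htrans : ∑' k : ℤ, F₂ (n - k) ^ (2:ℝ) = E₂ :=
      (Equiv.subLeft n).tsum_eq (fun k => F₂ k ^ (2:ℝ))
    calc B n = ∑' m : Z',
          (fun p : ℤ × Bool => F₂ (n - p.1) ^ (2:ℝ))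
            ((fun m : Z' => (((m:ℤ)^2 : ℤ), decide (0 < (m:ℤ)))) m) := rfl
      _ ≤ ∑' p : ℤ × Bool, F₂ (n - p.1) ^ (2:ℝ) :=
          ENNReal.tsum_comp_le_tsum_of_injective Stmt18Aux.sq_inj _
      _ = ∑' k : ℤ, ∑' b : Bool, F₂ (n - k) ^ (2:ℝ) :=
          ENNReal.tsum_prod (f := fun k (_ : Bool) => F₂ (n - k) ^ (2:ℝ))
      _ = ∑' k : ℤ, 2 * (F₂ (n - k) ^ (2:ℝ)) := by
          apply tsum_congr; intro k
          rw [tsum_bool, two_mul]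
      _ = 2 * ∑' k : ℤ, F₂ (n - k) ^ (2:ℝ) := ENNReal.tsum_mul_left
      _ = 2 * E₂ := by rw [htrans]
  -- sum of A
  have hAsum : ∑' n : ℤ, A n = (∑' m : Z', κ m ^ (2:ℝ)) * E₁ := by
    calc ∑' n : ℤ, A n = ∑' n : ℤ, ∑' m : Z', κ m ^ (2:ℝ) * F₁ (n - m) ^ (2:ℝ) := by
          apply tsum_congr; intro n; apply tsum_congr; intro m
          rw [ENNReal.mul_rpow_of_nonneg _ _ (by norm_num)]
      _ = ∑' m : Z', ∑' n : ℤ, κ m ^ (2:ℝ) * F₁ (n - m) ^ (2:ℝ) := ENNReal.tsum_comm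
      _ = ∑' m : Z', κ m ^ (2:ℝ) * ∑' n : ℤ, F₁ (n - m) ^ (2:ℝ) := by
          apply tsum_congr; intro m; exact ENNReal.tsum_mul_left
      _ = ∑' m : Z', κ m ^ (2:ℝ) * E₁ := by
          apply tsum_congr; intro m
          have htr : ∑' n : ℤ, F₁ (n - (m:ℤ)) ^ (2:ℝ) = E₁ :=
            (Equiv.subRight (m:ℤ)).tsum_eq (fun k => F₁ k ^ (2:ℝ))
          rw [htr]
      _ = (∑' m : Z', κ m ^ (2:ℝ)) * E₁ := ENNReal.tsum_mul_right
  -- kernel sum bound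
  have hκbd : (∑' m : Z', κ m ^ (2:ℝ)) ≤ ENNReal.ofReal (C₀^2 * Sr) := by
    have hterm : ∀ m : Z', κ m ^ (2:ℝ) ≤ ENNReal.ofReal (C₀^2 * (1 / ((m:ℤ):ℝ)^2)) := by
      intro m
      have h1 : κ m ≤ ENNReal.ofReal (C₀ / |((m:ℤ):ℝ)|) := by
        show (‖K (m:ℤ)‖₊ : ℝ≥0∞) ≤ _
        rw [← enorm_eq_nnnorm, ← ofReal_norm]
        exact ENNReal.ofReal_le_ofReal (hK m m.2)
      calc κ m ^ (2:ℝ) ≤ (ENNReal.ofReal (C₀ / |((m:ℤ):ℝ)|)) ^ (2:ℝ) :=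
            ENNReal.rpow_le_rpow h1 (by norm_num)
        _ = ENNReal.ofReal ((C₀ / |((m:ℤ):ℝ)|) ^ (2:ℝ)) :=
            ENNReal.ofReal_rpow_of_nonneg (by positivity) (by norm_num)
        _ = ENNReal.ofReal (C₀^2 * (1 / ((m:ℤ):ℝ)^2)) := by
            congr 1
            rw [show ((2:ℝ)) = ((2:ℕ):ℝ) by norm_num, Real.rpow_natCast, div_pow,
              _root_.sq_abs]
            ring
    calc (∑' m : Z', κ m ^ (2:ℝ))
        ≤ ∑' m : Z', ENNReal.ofReal (C₀^2 * (1 / ((m:ℤ):ℝ)^2)) := ENNReal.tsum_le_tsum hterm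
      _ = ENNReal.ofReal (∑' m : Z', C₀^2 * (1 / ((m:ℤ):ℝ)^2)) :=
          (ENNReal.ofReal_tsum_of_nonneg (fun m => by positivity) (hSr_sum.mul_left _)).symm
      _ = ENNReal.ofReal (C₀^2 * Sr) := by rw [tsum_mul_left]
  -- total bound
  have htot : ∑' n : ℤ, (‖T n‖₊ : ℝ≥0∞) ^ (2:ℝ)
      ≤ ENNReal.ofReal (C₀^2 * Sr) * E₁ * (2 * E₂) := by
    calc ∑' n : ℤ, (‖T n‖₊ : ℝ≥0∞) ^ (2:ℝ) ≤ ∑' n : ℤ, A n * B n :=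
          ENNReal.tsum_le_tsum hpt
      _ ≤ ∑' n : ℤ, A n * (2 * E₂) :=
          ENNReal.tsum_le_tsum (fun n => mul_le_mul_right (hBbd n) _)
      _ = (∑' n : ℤ, A n) * (2 * E₂) := ENNReal.tsum_mul_right
      _ = (∑' m : Z', κ m ^ (2:ℝ)) * E₁ * (2 * E₂) := by rw [hAsum]
      _ ≤ ENNReal.ofReal (C₀^2 * Sr) * E₁ * (2 * E₂) := by
          gcongr
  -- from total bound to eLpNorm bound
  have hE₁top : E₁ ≠ ⊤ := Stmt18Aux.E_ne_top f₁ h₁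
  have hE₂top : E₂ ≠ ⊤ := Stmt18Aux.E_ne_top f₂ h₂
  set t₁ : ℝ := (eLpNorm f₁ 2 (Measure.count : Measure ℤ)).toReal with ht₁
  set t₂ : ℝ := (eLpNorm f₂ 2 (Measure.count : Measure ℤ)).toReal with ht₂
  have he₁ : eLpNorm f₁ 2 (Measure.count : Measure ℤ) = E₁ ^ (1/2:ℝ) := Stmt18Aux.l2_eq f₁
  have he₂ : eLpNorm f₂ 2 (Measure.count : Measure ℤ) = E₂ ^ (1/2:ℝ) := Stmt18Aux.l2_eq f₂
  have he₁top : E₁ ^ (1/2:ℝ) ≠ ⊤ := ENNReal.rpow_ne_top_of_nonneg (by norm_num) hE₁top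
  have he₂top : E₂ ^ (1/2:ℝ) ≠ ⊤ := ENNReal.rpow_ne_top_of_nonneg (by norm_num) hE₂top
  have ht₁e : ENNReal.ofReal t₁ = E₁ ^ (1/2:ℝ) := by
    rw [ht₁, he₁]; exact ENNReal.ofReal_toReal he₁top
  have ht₂e : ENNReal.ofReal t₂ = E₂ ^ (1/2:ℝ) := by
    rw [ht₂, he₂]; exact ENNReal.ofReal_toReal he₂top
  -- constant comparison
  have hconst : (ENNReal.ofReal (C₀^2 * Sr)) ^ (1/2:ℝ) * (2:ℝ≥0∞) ^ (1/2:ℝ)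
      ≤ ENNReal.ofReal C := by
    have h2 : (2:ℝ≥0∞) = ENNReal.ofReal 2 := by norm_num
    rw [h2, ENNReal.ofReal_rpow_of_nonneg (by positivity) (by norm_num),
      ENNReal.ofReal_rpow_of_nonneg (by norm_num) (by norm_num),
      ← ENNReal.ofReal_mul (by positivity)]
    apply ENNReal.ofReal_le_ofReal
    rw [← Real.sqrt_eq_rpow, ← Real.sqrt_eq_rpow, ← Real.sqrt_mul (by positivity),
      show C₀^2 * Sr * 2 = C₀^2 * (2 * Sr) by ring, Real.sqrt_mul (sq_nonneg C₀),
      Real.sqrt_sq hC₀]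
    rw [hCdef]
    linarith
  calc eLpNorm T 2 (Measure.count : Measure ℤ)
      = (∑' n : ℤ, (‖T n‖₊ : ℝ≥0∞) ^ (2:ℝ)) ^ (1/2:ℝ) := Stmt18Aux.l2_eq T
    _ ≤ (ENNReal.ofReal (C₀^2 * Sr) * E₁ * (2 * E₂)) ^ (1/2:ℝ) :=
        ENNReal.rpow_le_rpow htot (by norm_num)
    _ = (ENNReal.ofReal (C₀^2 * Sr)) ^ (1/2:ℝ) * (2:ℝ≥0∞) ^ (1/2:ℝ) *
          (E₁ ^ (1/2:ℝ) * E₂ ^ (1/2:ℝ)) := by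
        rw [ENNReal.mul_rpow_of_nonneg _ _ (by norm_num),
          ENNReal.mul_rpow_of_nonneg _ _ (by norm_num),
          ENNReal.mul_rpow_of_nonneg _ _ (by norm_num)]
        ring
    _ ≤ ENNReal.ofReal C * (E₁ ^ (1/2:ℝ) * E₂ ^ (1/2:ℝ)) := by
        exact mul_le_mul_left hconst _
    _ = ENNReal.ofReal (C * t₁ * t₂) := by
        rw [ENNReal.ofReal_mul (by positivity), ENNReal.ofReal_mul hCpos.le, ht₁e, ht₂e,
          mul_assoc]
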